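/- Let ν be a regularly varying probability distribution on ℝ₊ and λ > 0. Then the compound Poisson distribution CPois(λ,ν) is regularly varying with the same index as ν, and its tail satisfies F̄_{CPois(λ,ν)}(x) ~ λ·F̄_ν(x) as x → ∞. -/

import Mathlib

open Filter MeasureTheory

/-- A function is slowly varying if `ℓ(cx)/ℓ(x) → 1` for every `c > 0`. -/
def SlowlyVarying (l : ℝ → ℝ) : Prop :=
  ∀ c : ℝ, 0 < c → Tendsto (fun x => l (c * x) / l x) atTop (nhds 1)

/-- `j`-fold convolution power of a measure on ℝ. -/
noncomputable def convPowM (ν : Measure ℝ) : ℕ → Measure ℝ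
  | 0 => Measure.dirac 0
  | (j + 1) => (convPowM ν j).conv ν

/-- The compound Poisson distribution `CPois(λ, ν)` as a measure on ℝ. -/
noncomputable def cpoisM (lam : ℝ) (ν : Measure ℝ) : Measure ℝ :=
  Measure.sum fun j : ℕ =>
    (ENNReal.ofReal (Real.exp (-lam) * lam ^ j / (Nat.factorial j))) • convPowM ν j

/-- Tail `μ((x, ∞))` of a measure on ℝ. -/
noncomputable def tailM (μ : Measure ℝ) (x : ℝ) : ℝ := (μ (Set.Ioi x)).toReal

namespace Stmt16Aux
open Set

set_option linter.unusedSectionVars false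
set_option linter.unusedVariables false



lemma tailM_nonneg (μ : Measure ℝ) (x : ℝ) : 0 ≤ tailM μ x := ENNReal.toReal_nonneg

lemma tailM_le_one (μ : Measure ℝ) [IsProbabilityMeasure μ] (x : ℝ) : tailM μ x ≤ 1 := by
  have h : μ (Set.Ioi x) ≤ 1 := prob_le_one
  simpa [tailM] using ENNReal.toReal_mono ENNReal.one_ne_top h

lemma tailM_anti (μ : Measure ℝ) [IsFiniteMeasure μ] : Antitone (tailM μ) := by
  intro x y h
  exact ENNReal.toReal_mono (measure_ne_top _ _) (measure_mono (Ioi_subset_Ioi h))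

instance convPow_prob (ν : Measure ℝ) [IsProbabilityMeasure ν] (j : ℕ) :
    IsProbabilityMeasure (convPowM ν j) := by
  induction j with
  | zero => rw [convPowM]; infer_instance
  | succ j ih =>
    rw [convPowM]
    exact Measure.probabilitymeasure_of_probabilitymeasures_conv _ _

lemma conv_apply_prod (μ ν : Measure ℝ) [SFinite μ] [SFinite ν] {s : Set ℝ}
    (hs : MeasurableSet s) :
    (μ.conv ν) s = (μ.prod ν) {p : ℝ × ℝ | p.1 + p.2 ∈ s} := by
  rw [Measure.conv, Measure.map_apply measurable_add hs]
  rfl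

lemma convPow_Iio (ν : Measure ℝ) [IsProbabilityMeasure ν] (hpos : ν (Set.Iio 0) = 0) (j : ℕ) :
    convPowM ν j (Set.Iio 0) = 0 := by
  induction j with
  | zero =>
    rw [convPowM]
    simp [Measure.dirac_apply' _ measurableSet_Iio]
  | succ j ih =>
    rw [convPowM, conv_apply_prod _ _ measurableSet_Iio]
    refine le_antisymm ?_ zero_le
    have hsub : {p : ℝ × ℝ | p.1 + p.2 ∈ Set.Iio 0} ⊆
        (Set.Iio 0 ×ˢ Set.univ) ∪ (Set.univ ×ˢ Set.Iio 0) := by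
      rintro ⟨a, b⟩ h
      simp only [Set.mem_Iio, Set.mem_setOf_eq] at h
      by_cases h1 : a < 0
      · exact Or.inl ⟨h1, trivial⟩
      · exact Or.inr ⟨trivial, Set.mem_Iio.2 (by push_neg at h1; linarith)⟩
    calc (convPowM ν j).prod ν {p : ℝ × ℝ | p.1 + p.2 ∈ Set.Iio 0}
        ≤ (convPowM ν j).prod ν ((Set.Iio 0 ×ˢ Set.univ) ∪ (Set.univ ×ˢ Set.Iio 0)) :=
          measure_mono hsub
      _ ≤ (convPowM ν j).prod ν (Set.Iio 0 ×ˢ Set.univ)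
          + (convPowM ν j).prod ν (Set.univ ×ˢ Set.Iio 0) := measure_union_le _ _
      _ = 0 := by rw [Measure.prod_prod, Measure.prod_prod, ih, hpos]; simp

lemma tail_conv_le (μ ν : Measure ℝ) [IsProbabilityMeasure μ] [IsProbabilityMeasure ν]
    (x δ : ℝ) :
    tailM (μ.conv ν) x ≤ tailM μ ((1 - δ) * x) + tailM ν ((1 - δ) * x)
      + tailM μ (δ * x) * tailM ν (δ * x) := by
  have key : (μ.conv ν) (Set.Ioi x) ≤ μ (Set.Ioi ((1 - δ) * x)) + ν (Set.Ioi ((1 - δ) * x))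
      + μ (Set.Ioi (δ * x)) * ν (Set.Ioi (δ * x)) := by
    rw [conv_apply_prod μ ν measurableSet_Ioi]
    have hsub : {p : ℝ × ℝ | p.1 + p.2 ∈ Set.Ioi x} ⊆
        ((Set.Ioi ((1 - δ) * x) ×ˢ Set.univ) ∪ (Set.univ ×ˢ Set.Ioi ((1 - δ) * x)))
          ∪ (Set.Ioi (δ * x) ×ˢ Set.Ioi (δ * x)) := by
      rintro ⟨a, b⟩ h
      simp only [Set.mem_Ioi, Set.mem_setOf_eq] at h
      by_cases h1 : (1 - δ) * x < a
      · exact Or.inl (Or.inl ⟨h1, trivial⟩)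
      by_cases h2 : (1 - δ) * x < b
      · exact Or.inl (Or.inr ⟨trivial, h2⟩)
      · push_neg at h1 h2
        exact Or.inr ⟨by simp only [Set.mem_Ioi]; nlinarith, by simp only [Set.mem_Ioi]; nlinarith⟩
    calc μ.prod ν {p : ℝ × ℝ | p.1 + p.2 ∈ Set.Ioi x}
        ≤ μ.prod ν (((Set.Ioi ((1 - δ) * x) ×ˢ Set.univ) ∪ (Set.univ ×ˢ Set.Ioi ((1 - δ) * x)))
            ∪ (Set.Ioi (δ * x) ×ˢ Set.Ioi (δ * x))) := measure_mono hsub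
      _ ≤ (μ.prod ν ((Set.Ioi ((1 - δ) * x) ×ˢ Set.univ))
            + μ.prod ν ((Set.univ ×ˢ Set.Ioi ((1 - δ) * x))))
          + μ.prod ν (Set.Ioi (δ * x) ×ˢ Set.Ioi (δ * x)) :=
          le_trans (measure_union_le _ _) (add_le_add (measure_union_le _ _) le_rfl)
      _ = _ := by rw [Measure.prod_prod, Measure.prod_prod, Measure.prod_prod]; simp
  have h1 : tailM (μ.conv ν) x ≤ (μ (Set.Ioi ((1 - δ) * x)) + ν (Set.Ioi ((1 - δ) * x))
      + μ (Set.Ioi (δ * x)) * ν (Set.Ioi (δ * x))).toReal := by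
    apply ENNReal.toReal_mono _ key
    exact ENNReal.add_ne_top.2 ⟨ENNReal.add_ne_top.2 ⟨measure_ne_top _ _, measure_ne_top _ _⟩,
      ENNReal.mul_ne_top (measure_ne_top _ _) (measure_ne_top _ _)⟩
  rw [ENNReal.toReal_add, ENNReal.toReal_add, ENNReal.toReal_mul] at h1
  · exact h1
  · exact measure_ne_top _ _
  · exact measure_ne_top _ _
  · exact ENNReal.add_ne_top.2 ⟨measure_ne_top _ _, measure_ne_top _ _⟩
  · exact ENNReal.mul_ne_top (measure_ne_top _ _) (measure_ne_top _ _)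

lemma tail_conv_ge (μ ν : Measure ℝ) [IsProbabilityMeasure μ] [IsProbabilityMeasure ν]
    (hμ : μ (Set.Iio 0) = 0) (hν : ν (Set.Iio 0) = 0) {x : ℝ} (hx : 0 ≤ x) :
    tailM μ x + tailM ν x - tailM μ x * tailM ν x ≤ tailM (μ.conv ν) x := by
  have hμc : μ (Set.Ici 0) = 1 := by
    rw [← Set.compl_Iio, measure_compl measurableSet_Iio (measure_ne_top _ _), hμ,
      measure_univ, tsub_zero]
  have hνc : ν (Set.Ici 0) = 1 := by
    rw [← Set.compl_Iio, measure_compl measurableSet_Iio (measure_ne_top _ _), hν,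
      measure_univ, tsub_zero]
  set A : Set (ℝ × ℝ) := Set.Ioi x ×ˢ Set.Ici 0
  set B : Set (ℝ × ℝ) := Set.Ici 0 ×ˢ Set.Ioi x
  have hsub : A ∪ B ⊆ {p : ℝ × ℝ | p.1 + p.2 ∈ Set.Ioi x} := by
    rintro ⟨a, b⟩ (⟨h1, h2⟩ | ⟨h1, h2⟩) <;>
      simp only [Set.mem_Ioi, Set.mem_Ici, Set.mem_setOf_eq] at * <;> linarith
  have hinter : A ∩ B = Set.Ioi x ×ˢ Set.Ioi x := by
    rw [Set.prod_inter_prod]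
    congr 1
    · rw [Set.inter_eq_left]; exact fun a ha => le_trans hx (le_of_lt ha)
    · rw [Set.inter_eq_right]; exact fun a ha => le_trans hx (le_of_lt ha)
  have hkey := measure_union_add_inter (μ := μ.prod ν) A
    ((measurableSet_Ici.prod measurableSet_Ioi) : MeasurableSet B)
  rw [hinter, Measure.prod_prod, Measure.prod_prod, Measure.prod_prod, hμc, hνc,
    mul_one, one_mul] at hkey
  -- hkey : (μ.prod ν) (A ∪ B) + μ (Ioi x) * ν (Ioi x) = μ (Ioi x) + ν (Ioi x)
  have hge : (μ.prod ν) (A ∪ B) ≤ (μ.conv ν) (Set.Ioi x) := by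
    rw [conv_apply_prod μ ν measurableSet_Ioi]
    exact measure_mono hsub
  have hfin : (μ.prod ν) (A ∪ B) ≠ ⊤ := measure_ne_top _ _
  have hr := congrArg ENNReal.toReal hkey
  rw [ENNReal.toReal_add hfin (ENNReal.mul_ne_top (measure_ne_top _ _) (measure_ne_top _ _)),
    ENNReal.toReal_add (measure_ne_top _ _) (measure_ne_top _ _), ENNReal.toReal_mul] at hr
  have hr2 : tailM (μ.conv ν) x ≥ ((μ.prod ν) (A ∪ B)).toReal :=
    ENNReal.toReal_mono (measure_ne_top _ _) hge
  simp only [tailM] at *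
  linarith



variable {ν : Measure ℝ} [IsProbabilityMeasure ν] {α : ℝ} {l : ℝ → ℝ}

lemma l_event_ne (hl : SlowlyVarying l) : ∀ᶠ x in atTop, l x ≠ 0 := by
  have h := (hl 1 one_pos).eventually (lt_mem_nhds (by norm_num : (1:ℝ)/2 < 1))
  filter_upwards [h] with x hx
  intro h0
  rw [one_mul, h0, div_zero] at hx
  linarith

lemma F_pos (hα : 0 < α) (hl : SlowlyVarying l)
    (htail : ∀ x : ℝ, 0 < x → tailM ν x = x ^ (-α) * l x) (x : ℝ) : 0 < tailM ν x := by
  obtain ⟨y, hy1, hy2⟩ := ((eventually_ge_atTop (max x 1)).and (l_event_ne hl)).exists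
  have hy0 : (0:ℝ) < y := lt_of_lt_of_le one_pos (le_trans (le_max_right x 1) hy1)
  have hFy : 0 < tailM ν y := by
    rw [htail y hy0]
    rcases (tailM_nonneg ν y).lt_or_eq with h | h
    · rwa [htail y hy0] at h
    · exfalso
      apply hy2
      have hxp : (0:ℝ) < y ^ (-α) := Real.rpow_pos_of_pos hy0 _
      rw [htail y hy0] at h
      rcases mul_eq_zero.1 h.symm with h' | h'
      · exact absurd h' (ne_of_gt hxp)
      · exact h'
  exact lt_of_lt_of_le hFy (tailM_anti ν (le_trans (le_max_left x 1) hy1))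

lemma F_ratio (hα : 0 < α) (hl : SlowlyVarying l)
    (htail : ∀ x : ℝ, 0 < x → tailM ν x = x ^ (-α) * l x) {c : ℝ} (hc : 0 < c) :
    Tendsto (fun x => tailM ν (c * x) / tailM ν x) atTop (nhds (c ^ (-α))) := by
  have h := (hl c hc).const_mul (c ^ (-α))
  rw [mul_one] at h
  refine Tendsto.congr' ?_ h
  filter_upwards [eventually_gt_atTop 0, l_event_ne hl] with x hx hlx
  have hxp : (0:ℝ) < x ^ (-α) := Real.rpow_pos_of_pos hx _
  rw [htail _ (by positivity), htail _ hx, Real.mul_rpow hc.le hx.le]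
  field_simp

lemma F_to_zero (hα : 0 < α) (hl : SlowlyVarying l)
    (htail : ∀ x : ℝ, 0 < x → tailM ν x = x ^ (-α) * l x) :
    Tendsto (tailM ν) atTop (nhds 0) := by
  have hanti := tailM_anti ν
  have hbdd : BddBelow (Set.range (tailM ν)) :=
    ⟨0, by rintro y ⟨x, rfl⟩; exact tailM_nonneg ν x⟩
  have hlim := tendsto_atTop_ciInf hanti hbdd
  set L := ⨅ x, tailM ν x with hLdef
  have hL0 : 0 ≤ L := le_ciInf fun x => tailM_nonneg ν x
  rcases hL0.lt_or_eq with h | h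
  · exfalso
    have h2 : Tendsto (fun x => tailM ν (2 * x)) atTop (nhds L) :=
      hlim.comp (Tendsto.const_mul_atTop two_pos tendsto_id)
    have hdiv : Tendsto (fun x => tailM ν (2 * x) / tailM ν x) atTop (nhds (L / L)) :=
      h2.div hlim (ne_of_gt h)
    have huniq := tendsto_nhds_unique hdiv (F_ratio hα hl htail two_pos)
    rw [div_self (ne_of_gt h)] at huniq
    have hlt : (2:ℝ) ^ (-α) < 1 :=
      Real.rpow_lt_one_of_one_lt_of_neg one_lt_two (neg_neg_of_pos hα)
    rw [← huniq] at hlt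
    exact lt_irrefl _ hlt
  · rwa [← h] at hlim



lemma tail_convPow_zero {x : ℝ} (hx : 0 < x) : tailM (convPowM ν 0) x = 0 := by
  rw [convPowM, tailM, Measure.dirac_apply' _ measurableSet_Ioi]
  simp [Set.indicator_apply, not_lt.2 hx.le]

lemma ratio_tendsto (hpos : ν (Set.Iio 0) = 0) (hα : 0 < α) (hl : SlowlyVarying l)
    (htail : ∀ x : ℝ, 0 < x → tailM ν x = x ^ (-α) * l x) (j : ℕ) :
    Tendsto (fun x => tailM (convPowM ν j) x / tailM ν x) atTop (nhds (j : ℝ)) := by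
  have hFpos := F_pos hα hl htail
  have hF0 := F_to_zero hα hl htail
  induction j with
  | zero =>
    have hev : ∀ᶠ x in atTop, (0:ℝ) = tailM (convPowM ν 0) x / tailM ν x := by
      filter_upwards [eventually_gt_atTop 0] with x hx
      rw [tail_convPow_zero hx, zero_div]
    rw [show ((0:ℕ):ℝ) = 0 by norm_num]
    exact Tendsto.congr' hev tendsto_const_nhds
  | succ j ih =>
    have hTj0 : Tendsto (fun x => tailM (convPowM ν j) x) atTop (nhds 0) := by
      have h := ih.mul hF0
      rw [mul_zero] at h
      refine h.congr fun x => ?_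
      exact div_mul_cancel₀ _ (ne_of_gt (hFpos x))
    have hsucc : ∀ y : ℝ, tailM (convPowM ν (j+1)) y = tailM ((convPowM ν j).conv ν) y := by
      intro y; rw [convPowM]
    have hcast : ((j+1 : ℕ) : ℝ) = (j:ℝ) + 1 := by push_cast; ring
    rw [hcast, tendsto_order]
    constructor
    · intro a ha
      have hW : Tendsto (fun x => tailM (convPowM ν j) x / tailM ν x + 1
          - tailM (convPowM ν j) x) atTop (nhds ((j:ℝ) + 1)) := by
        have h := (ih.add (tendsto_const_nhds (x := (1:ℝ)))).sub hTj0
        simpa using h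
      filter_upwards [hW.eventually (eventually_gt_nhds ha), eventually_ge_atTop 0]
        with x h1 h2
      have hge := tail_conv_ge (convPowM ν j) ν (convPow_Iio ν hpos j) hpos h2
      have hFx := hFpos x
      have key : tailM (convPowM ν j) x / tailM ν x + 1 - tailM (convPowM ν j) x
          ≤ tailM (convPowM ν (j+1)) x / tailM ν x := by
        rw [hsucc x, le_div_iff₀ hFx]
        have expand : (tailM (convPowM ν j) x / tailM ν x + 1 - tailM (convPowM ν j) x)
            * tailM ν x
            = tailM (convPowM ν j) x + tailM ν x
              - tailM (convPowM ν j) x * tailM ν x := by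
          field_simp
        rw [expand]
        exact hge
      exact lt_of_lt_of_le h1 key
    · intro b hb
      -- pick δ ∈ (0,1) with (j+1)*(1-δ)^(-α) < b
      have hc0' : ContinuousAt (fun δ : ℝ => ((j:ℝ)+1) * (1 - δ) ^ (-α)) 0 := by
        apply continuousAt_const.mul
        have hbase : ContinuousAt (fun δ : ℝ => (1:ℝ) - δ) 0 := by fun_prop
        have hrpow : ContinuousAt (fun y : ℝ => y ^ (-α)) ((1:ℝ) - 0) :=
          Real.continuousAt_rpow_const _ _ (Or.inl (by norm_num))
        exact hrpow.comp hbase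
      have hg0 : ((j:ℝ)+1) * ((1:ℝ) - 0) ^ (-α) = (j:ℝ)+1 := by
        norm_num
      have hcont : Tendsto (fun δ : ℝ => ((j:ℝ)+1) * (1-δ)^(-α)) (nhdsWithin 0 (Set.Ioi 0))
          (nhds ((j:ℝ)+1)) := by
        have h := hc0'.tendsto.mono_left (nhdsWithin_le_nhds (s := Set.Ioi (0:ℝ)))
        simpa [hg0] using h
      have hev : ∀ᶠ δ in nhdsWithin (0:ℝ) (Set.Ioi 0), ((j:ℝ)+1) * (1-δ)^(-α) < b :=
        hcont.eventually (eventually_lt_nhds hb)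
      have hIoo : ∀ᶠ δ in nhdsWithin (0:ℝ) (Set.Ioi 0), δ ∈ Set.Ioo (0:ℝ) 1 :=
        Ioo_mem_nhdsGT one_pos
      obtain ⟨δ, hδb, hδ0, hδ1⟩ := (hev.and hIoo).exists
      have hc0 : (0:ℝ) < 1 - δ := by linarith
      have hmc : Tendsto (fun x : ℝ => (1-δ) * x) atTop atTop :=
        Tendsto.const_mul_atTop hc0 tendsto_id
      have hmδ : Tendsto (fun x : ℝ => δ * x) atTop atTop :=
        Tendsto.const_mul_atTop hδ0 tendsto_id
      have hB := F_ratio hα hl htail hc0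
      have hBδ := F_ratio hα hl htail hδ0
      have hA : Tendsto (fun x => tailM (convPowM ν j) ((1-δ)*x) / tailM ν ((1-δ)*x))
          atTop (nhds (j:ℝ)) := ih.comp hmc
      have hAδ : Tendsto (fun x => tailM (convPowM ν j) (δ*x) / tailM ν (δ*x))
          atTop (nhds (j:ℝ)) := ih.comp hmδ
      have hFδ : Tendsto (fun x => tailM ν (δ*x)) atTop (nhds 0) := hF0.comp hmδ
      have hA' : Tendsto (fun x => tailM (convPowM ν j) ((1-δ)*x) / tailM ν x)
          atTop (nhds ((j:ℝ) * (1-δ)^(-α))) := by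
        refine (hA.mul hB).congr fun x => ?_
        have hb' := (hFpos ((1-δ)*x)).ne'
        field_simp
      have hC : Tendsto (fun x => tailM (convPowM ν j) (δ*x) * tailM ν (δ*x) / tailM ν x)
          atTop (nhds 0) := by
        have h := (hAδ.mul hBδ).mul hFδ
        rw [mul_zero] at h
        refine h.congr fun x => ?_
        have hb' := (hFpos (δ*x)).ne'
        field_simp
      have hV : Tendsto (fun x => tailM (convPowM ν j) ((1-δ)*x) / tailM ν x
          + tailM ν ((1-δ)*x) / tailM ν x
          + tailM (convPowM ν j) (δ*x) * tailM ν (δ*x) / tailM ν x) atTop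
          (nhds ((j:ℝ) * (1-δ)^(-α) + (1-δ)^(-α) + 0)) := (hA'.add hB).add hC
      have hlim_lt : (j:ℝ) * (1-δ)^(-α) + (1-δ)^(-α) + 0 < b := by
        have : ((j:ℝ)+1) * (1-δ)^(-α) = (j:ℝ) * (1-δ)^(-α) + (1-δ)^(-α) + 0 := by ring
        linarith [hδb, this ▸ hδb]
      filter_upwards [hV.eventually (eventually_lt_nhds hlim_lt)] with x hVx
      have hle := tail_conv_le (convPowM ν j) ν x δ
      have hFx := hFpos x
      have hdiv : tailM (convPowM ν (j+1)) x / tailM ν x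
          ≤ tailM (convPowM ν j) ((1-δ)*x) / tailM ν x
            + tailM ν ((1-δ)*x) / tailM ν x
            + tailM (convPowM ν j) (δ*x) * tailM ν (δ*x) / tailM ν x := by
        rw [hsucc x, ← add_div, ← add_div]
        exact (div_le_div_iff_of_pos_right hFx).mpr hle
      exact lt_of_le_of_lt hdiv hVx

lemma unif_bound (hpos : ν (Set.Iio 0) = 0) (hα : 0 < α) (hl : SlowlyVarying l)
    (htail : ∀ x : ℝ, 0 < x → tailM ν x = x ^ (-α) * l x) :
    ∃ X₀ C K : ℝ, 0 < X₀ ∧ 0 ≤ C ∧ 1 ≤ K ∧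
      ∀ j : ℕ, ∀ x : ℝ, X₀ ≤ x → tailM (convPowM ν j) x / tailM ν x ≤ C * K ^ j := by
  have hFpos := F_pos hα hl htail
  set L : ℝ := ((1:ℝ)/2) ^ (-α) with hLdef
  have hL0 : 0 < L := Real.rpow_pos_of_pos (by norm_num) _
  set Q : ℝ := L + 1 with hQdef
  have hQ1 : 1 ≤ Q := by simp [hQdef]; linarith
  have hq : Tendsto (fun x => tailM ν ((1/2) * x) / tailM ν x) atTop (nhds L) :=
    F_ratio hα hl htail (by norm_num)
  obtain ⟨X₁, hX₁⟩ := (eventually_atTop).1 (hq.eventually (eventually_lt_nhds (by linarith : L < Q)))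
  set X₀ : ℝ := max X₁ 1 with hX₀def
  have hX₀pos : (0:ℝ) < X₀ := lt_of_lt_of_le one_pos (le_max_right _ _)
  set D : ℝ := (tailM ν X₀)⁻¹ with hDdef
  have hD0 : 0 ≤ D := inv_nonneg.2 (tailM_nonneg ν X₀)
  set C : ℝ := D + Q with hCdef
  have hC0 : 0 ≤ C := by linarith
  set K : ℝ := 2 * Q + 1 with hKdef
  have hK1 : 1 ≤ K := by linarith
  refine ⟨X₀, C, K, hX₀pos, hC0, hK1, ?_⟩
  intro j
  induction j with
  | zero =>
    intro x hx
    rw [tail_convPow_zero (lt_of_lt_of_le hX₀pos hx), zero_div, pow_zero, mul_one]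
    exact hC0
  | succ j ihj =>
    intro x hx
    have hxpos : 0 < x := lt_of_lt_of_le hX₀pos hx
    set y : ℝ := (1/2) * x with hydef
    have hKj1 : (1:ℝ) ≤ K ^ j := one_le_pow₀ hK1
    have hQC : Q ≤ C * K ^ j := by
      calc Q ≤ C := by linarith
        _ = C * 1 := (mul_one C).symm
        _ ≤ C * K ^ j := by
            apply mul_le_mul_of_nonneg_left hKj1 hC0
    -- bound on r_j y
    have hry : tailM (convPowM ν j) y / tailM ν y ≤ C * K ^ j := by
      rcases le_total X₀ y with h | h
      · exact ihj y h
      · have h1 : tailM (convPowM ν j) y ≤ 1 := tailM_le_one _ y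
        have h2 : tailM ν X₀ ≤ tailM ν y := tailM_anti ν h
        have h3 : 0 < tailM ν X₀ := hFpos X₀
        have : tailM (convPowM ν j) y / tailM ν y ≤ 1 / tailM ν X₀ :=
          div_le_div₀ (by norm_num) h1 h3 h2
        calc tailM (convPowM ν j) y / tailM ν y ≤ 1 / tailM ν X₀ := this
          _ = D := by rw [hDdef, one_div]
          _ ≤ C := by linarith
          _ ≤ C * K ^ j := by
              calc C = C * 1 := (mul_one C).symm
                _ ≤ C * K ^ j := mul_le_mul_of_nonneg_left hKj1 hC0
    have hqx : tailM ν y / tailM ν x ≤ Q := le_of_lt (hX₁ x (le_trans (le_max_left _ _) hx))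
    have hqx0 : 0 ≤ tailM ν y / tailM ν x := div_nonneg (tailM_nonneg _ _) (tailM_nonneg _ _)
    have hry0 : 0 ≤ tailM (convPowM ν j) y / tailM ν y :=
      div_nonneg (tailM_nonneg _ _) (tailM_nonneg _ _)
    have hFy1 : tailM ν y ≤ 1 := tailM_le_one _ _
    have hFy0 : 0 < tailM ν y := hFpos y
    have hFx : 0 < tailM ν x := hFpos x
    have hle := tail_conv_le (convPowM ν j) ν x (1/2)
    rw [show (1 : ℝ) - 1/2 = 1/2 by norm_num] at hle
    have hsucc : tailM (convPowM ν (j+1)) x = tailM ((convPowM ν j).conv ν) x := by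
      rw [convPowM]
    -- abbreviations
    set a : ℝ := tailM (convPowM ν j) y / tailM ν y with hadef
    set q : ℝ := tailM ν y / tailM ν x with hqdef
    have hCK0 : 0 ≤ C * K ^ j := le_trans hry0 hry
    have hexp : (tailM (convPowM ν j) y + tailM ν y + tailM (convPowM ν j) y * tailM ν y)
        / tailM ν x = a * q + q + a * q * tailM ν y := by
      rw [hadef, hqdef]
      field_simp
    have h1 : a * q ≤ (C * K ^ j) * Q := mul_le_mul hry hqx hqx0 hCK0
    have h2 : q ≤ C * K ^ j := le_trans hqx hQC
    have h3 : a * q * tailM ν y ≤ (C * K ^ j) * Q := by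
      calc a * q * tailM ν y ≤ a * q * 1 :=
            mul_le_mul_of_nonneg_left hFy1 (mul_nonneg hry0 hqx0)
        _ = a * q := mul_one _
        _ ≤ (C * K ^ j) * Q := h1
    have hfinal : tailM (convPowM ν (j+1)) x / tailM ν x
        ≤ (C * K ^ j) * Q + (C * K ^ j) + (C * K ^ j) * Q := by
      rw [hsucc]
      calc tailM ((convPowM ν j).conv ν) x / tailM ν x
          ≤ (tailM (convPowM ν j) y + tailM ν y
              + tailM (convPowM ν j) y * tailM ν y) / tailM ν x := by
            apply (div_le_div_iff_of_pos_right hFx).mpr hle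
        _ = a * q + q + a * q * tailM ν y := hexp
        _ ≤ (C * K ^ j) * Q + (C * K ^ j) + (C * K ^ j) * Q := by
            exact add_le_add (add_le_add h1 h2) h3
    calc tailM (convPowM ν (j+1)) x / tailM ν x
        ≤ (C * K ^ j) * Q + (C * K ^ j) + (C * K ^ j) * Q := hfinal
      _ = C * K ^ j * (2 * Q + 1) := by ring
      _ = C * K ^ (j+1) := by rw [hKdef, pow_succ]; ring



lemma p_nonneg (lam : ℝ) (hlam : 0 < lam) (j : ℕ) :
    0 ≤ Real.exp (-lam) * lam ^ j / (Nat.factorial j) := by positivity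

lemma p_summable (lam : ℝ) :
    Summable (fun j : ℕ => Real.exp (-lam) * lam ^ j / (Nat.factorial j)) := by
  have h := Real.summable_pow_div_factorial lam
  have := h.mul_left (Real.exp (-lam))
  simpa [mul_div_assoc] using this

lemma p_tsum (lam : ℝ) :
    ∑' j : ℕ, Real.exp (-lam) * lam ^ j / (Nat.factorial j) = 1 := by
  have hexp : ∑' j : ℕ, lam ^ j / (Nat.factorial j) = Real.exp lam := by
    rw [Real.exp_eq_exp_ℝ, NormedSpace.exp_eq_tsum_div]
  calc ∑' j : ℕ, Real.exp (-lam) * lam ^ j / (Nat.factorial j)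
      = ∑' j : ℕ, Real.exp (-lam) * (lam ^ j / (Nat.factorial j)) := by
        congr 1; funext j; ring
    _ = Real.exp (-lam) * ∑' j : ℕ, lam ^ j / (Nat.factorial j) := tsum_mul_left
    _ = Real.exp (-lam) * Real.exp lam := by rw [hexp]
    _ = 1 := by rw [← Real.exp_add]; simp

lemma p_succ (lam : ℝ) (j : ℕ) :
    Real.exp (-lam) * lam ^ (j+1) / (Nat.factorial (j+1)) * ((j:ℝ)+1)
      = lam * (Real.exp (-lam) * lam ^ j / (Nat.factorial j)) := by
  rw [Nat.factorial_succ]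
  have h1 : ((Nat.factorial j : ℝ)) ≠ 0 := Nat.cast_ne_zero.2 (Nat.factorial_ne_zero j)
  have h2 : ((j:ℝ) + 1) ≠ 0 := by positivity
  push_cast
  field_simp
  ring

lemma pj_summable (lam : ℝ) :
    Summable (fun j : ℕ => Real.exp (-lam) * lam ^ j / (Nat.factorial j) * (j:ℝ)) := by
  rw [← summable_nat_add_iff 1]
  have h := (p_summable lam).mul_left lam
  refine h.congr fun j => ?_
  rw [← p_succ lam j]
  push_cast
  ring

lemma p_mean (lam : ℝ) :
    ∑' j : ℕ, Real.exp (-lam) * lam ^ j / (Nat.factorial j) * (j:ℝ) = lam := by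
  rw [(pj_summable lam).tsum_eq_zero_add]
  simp only [Nat.cast_zero, mul_zero, zero_add]
  have : ∀ j : ℕ, Real.exp (-lam) * lam ^ (j+1) / (Nat.factorial (j+1)) * (((j:ℕ)+1 : ℕ):ℝ)
      = lam * (Real.exp (-lam) * lam ^ j / (Nat.factorial j)) := by
    intro j
    rw [← p_succ lam j]
    push_cast
    ring
  calc ∑' j : ℕ, Real.exp (-lam) * lam ^ (j+1) / (Nat.factorial (j+1)) * (((j+1 : ℕ)):ℝ)
      = ∑' j : ℕ, lam * (Real.exp (-lam) * lam ^ j / (Nat.factorial j)) := by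
        congr 1; funext j; exact this j
    _ = lam * ∑' j : ℕ, Real.exp (-lam) * lam ^ j / (Nat.factorial j) := tsum_mul_left
    _ = lam := by rw [p_tsum]; ring

lemma tail_cpois (lam : ℝ) (hlam : 0 < lam) (ν : Measure ℝ) [IsProbabilityMeasure ν] (x : ℝ) :
    tailM (cpoisM lam ν) x
      = ∑' j : ℕ, Real.exp (-lam) * lam ^ j / (Nat.factorial j) * tailM (convPowM ν j) x := by
  have h1 : cpoisM lam ν (Set.Ioi x)
      = ∑' j : ℕ, ENNReal.ofReal (Real.exp (-lam) * lam ^ j / (Nat.factorial j))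
          * convPowM ν j (Set.Ioi x) := by
    rw [cpoisM, Measure.sum_apply _ measurableSet_Ioi]
    simp [Measure.smul_apply, smul_eq_mul]
  rw [tailM, h1, ENNReal.tsum_toReal_eq]
  · congr 1
    funext j
    rw [ENNReal.toReal_mul, ENNReal.toReal_ofReal (p_nonneg lam hlam j)]
    rfl
  · intro j
    exact ENNReal.mul_ne_top ENNReal.ofReal_ne_top (measure_ne_top _ _)


end Stmt16Aux

/-- a compound Poisson distribution with regularly varying jump distribution
is regularly varying with the same index, with tail `~ λ F̄_ν(x)`. -/
theorem stmt16 (ν : Measure ℝ) [IsProbabilityMeasure ν] (hpos : ν (Set.Iio 0) = 0)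
    (lam : ℝ) (hlam : 0 < lam)
    (α : ℝ) (hα : 0 < α)
    (l : ℝ → ℝ) (hl : SlowlyVarying l)
    (htail : ∀ x : ℝ, 0 < x → tailM ν x = x ^ (-α) * l x) :
    (∃ l' : ℝ → ℝ, SlowlyVarying l' ∧
        ∀ᶠ x in atTop, tailM (cpoisM lam ν) x = x ^ (-α) * l' x) ∧
      Tendsto (fun x => tailM (cpoisM lam ν) x / (lam * tailM ν x)) atTop (nhds 1) := by
  set p : ℕ → ℝ := fun j => Real.exp (-lam) * lam ^ j / (Nat.factorial j) with hpdef
  have hp0 : ∀ j, 0 ≤ p j := fun j => Stmt16Aux.p_nonneg lam hlam j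
  obtain ⟨X₀, C, K, hX₀, hC, hK, hbw⟩ := Stmt16Aux.unif_bound hpos hα hl htail
  have hFpos := Stmt16Aux.F_pos hα hl htail
  have hG : Tendsto (fun x => ∑' j : ℕ, p j * (tailM (convPowM ν j) x / tailM ν x))
      atTop (nhds (∑' j : ℕ, p j * (j:ℝ))) := by
    apply tendsto_tsum_of_dominated_convergence (bound := fun j : ℕ => p j * (C * K ^ j))
    · have h := (Real.summable_pow_div_factorial (lam * K)).mul_left (Real.exp (-lam) * C)
      refine h.congr fun j => ?_
      rw [hpdef, mul_pow]
      field_simp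
    · intro j
      exact (Stmt16Aux.ratio_tendsto hpos hα hl htail j).const_mul (p j)
    · filter_upwards [eventually_ge_atTop X₀] with x hx
      intro j
      have h1 := hbw j x hx
      have h2 : 0 ≤ tailM (convPowM ν j) x / tailM ν x :=
        div_nonneg (Stmt16Aux.tailM_nonneg _ _) (Stmt16Aux.tailM_nonneg _ _)
      rw [Real.norm_eq_abs, abs_of_nonneg (mul_nonneg (hp0 j) h2)]
      exact mul_le_mul_of_nonneg_left h1 (hp0 j)
  rw [Stmt16Aux.p_mean lam] at hG
  have hmain : Tendsto (fun x => tailM (cpoisM lam ν) x / (lam * tailM ν x)) atTop (nhds 1) := by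
    have h := hG.div_const lam
    rw [div_self hlam.ne'] at h
    refine h.congr fun x => ?_
    have hs : ∑' j : ℕ, p j * (tailM (convPowM ν j) x / tailM ν x)
        = tailM (cpoisM lam ν) x / tailM ν x := by
      rw [Stmt16Aux.tail_cpois lam hlam ν x, ← tsum_div_const]
      congr 1
      funext j
      rw [mul_div_assoc]
    rw [hs, div_div, mul_comm (tailM ν x) lam]
  refine ⟨?_, hmain⟩
  refine ⟨fun x => x ^ α * tailM (cpoisM lam ν) x, ?_, ?_⟩
  · -- slowly varying
    intro c hc
    set R : ℝ → ℝ := fun x => tailM (cpoisM lam ν) x / (lam * tailM ν x) with hRdef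
    have hmulc : Tendsto (fun x : ℝ => c * x) atTop atTop :=
      Tendsto.const_mul_atTop hc tendsto_id
    have hRc : Tendsto (fun x => R (c * x)) atTop (nhds 1) := hmain.comp hmulc
    have hl' : ∀ᶠ x in atTop, x ^ α * tailM (cpoisM lam ν) x = R x * lam * l x := by
      filter_upwards [eventually_gt_atTop 0, Stmt16Aux.l_event_ne hl] with x hx hlx
      have hF : tailM ν x = x ^ (-α) * l x := htail x hx
      have hxa : x ^ (-α) ≠ 0 := (Real.rpow_pos_of_pos hx _).ne'
      have key : x ^ α * x ^ (-α) = 1 := by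
        rw [← Real.rpow_add hx]; simp
      rw [hRdef]
      simp only []
      rw [hF]
      field_simp
      linear_combination tailM (cpoisM lam ν) x * key
    have hl'c : ∀ᶠ x in atTop, (c*x) ^ α * tailM (cpoisM lam ν) (c*x)
        = R (c*x) * lam * l (c*x) := hmulc.eventually hl'
    have h1 : Tendsto (fun x => R (c*x) / R x) atTop (nhds 1) := by
      have h := hRc.div hmain one_ne_zero
      rw [div_one] at h
      exact h
    have hratio : Tendsto (fun x => (R (c*x) / R x) * (l (c*x) / l x)) atTop (nhds 1) := by
      have h := h1.mul (hl c hc)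
      simpa using h
    refine Tendsto.congr' ?_ hratio
    filter_upwards [hl', hl'c] with x hx1 hx2
    show R (c*x) / R x * (l (c*x) / l x)
        = (c*x) ^ α * tailM (cpoisM lam ν) (c*x) / (x ^ α * tailM (cpoisM lam ν) x)
    rw [hx1, hx2, div_mul_div_comm]
    have e1 : R (c*x) * lam * l (c*x) = lam * (R (c*x) * l (c*x)) := by ring
    have e2 : R x * lam * l x = lam * (R x * l x) := by ring
    rw [e1, e2, mul_div_mul_left _ _ hlam.ne']
  · filter_upwards [eventually_gt_atTop 0] with x hx
    have key : x ^ (-α) * (x ^ α * tailM (cpoisM lam ν) x) = tailM (cpoisM lam ν) x := by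
      rw [← mul_assoc, ← Real.rpow_add hx]; simp
    exact key.symm
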